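/- Let ξ : ℝ → ℝ be C², strictly increasing with ξ'(x) > 0 for all x, and suppose ξ'(x) ≍ |x|^{-1} and |ξ''(x)| ≤ C x^{-2} for |x| ≥ 1. Let κ ∈ ℂ \ [0,∞) and R ∈ C¹(ℝ) with |e^{iκx} R^{(l)}(x)| ≤ C(1+|x|)^{-a-l} for l = 0, 1 and some a ∈ (0,1). Then the integral J(N) = ∫_{-∞}^{∞} e^{-iξ(x)N + iκx} R(x) dx satisfies J(N) = O(|N|^{-a}) as N → +∞. -/

import Mathlib

open MeasureTheory Real Set Filter

lemma aux_kappa (κ : ℂ) (hκ : κ ∉ {w : ℂ | w.im = 0 ∧ 0 ≤ w.re}) :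
    ∃ c₀ : ℝ, 0 < c₀ ∧ ∀ t : ℝ, 0 ≤ t → c₀ * (1 + t) ≤ ‖κ - (t : ℂ)‖ := by
  have hne : ∀ t : ℝ, 0 ≤ t → κ ≠ (t : ℂ) := by
    intro t ht h
    exact hκ (by simp [h, Set.mem_setOf_eq, ht])
  set T : ℝ := 2 * ‖κ‖ + 2 with hT
  have hT0 : (0:ℝ) ≤ T := by positivity
  set f : ℝ → ℝ := fun t => ‖κ - (t : ℂ)‖ / (1 + t) with hf
  have hfc : ContinuousOn f (Set.Icc 0 T) := by
    apply ContinuousOn.div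
    · fun_prop
    · fun_prop
    · intro t ht; have := ht.1; intro h; linarith
  obtain ⟨t₀, ht₀, hmin'⟩ := isCompact_Icc.exists_isMinOn ⟨0, by constructor <;> simp [hT0]⟩ hfc
  have hmin := isMinOn_iff.mp hmin'
  have ht₀0 : 0 ≤ t₀ := ht₀.1
  have hft₀ : 0 < f t₀ := by
    apply div_pos
    · rw [norm_pos_iff, sub_ne_zero]
      exact hne t₀ ht₀0
    · linarith
  refine ⟨min (f t₀) 2⁻¹, by positivity, ?_⟩
  intro t ht
  by_cases htT : t ≤ T
  · have h1 : f t₀ ≤ f t := hmin t ⟨ht, htT⟩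
    have h2 : f t * (1 + t) = ‖κ - (t : ℂ)‖ := by
      simp only [hf]; exact div_mul_cancel₀ _ (ne_of_gt (by linarith))
    calc min (f t₀) 2⁻¹ * (1 + t) ≤ f t₀ * (1 + t) := by
          apply mul_le_mul_of_nonneg_right (min_le_left _ _); linarith
      _ ≤ f t * (1 + t) := by apply mul_le_mul_of_nonneg_right h1; linarith
      _ = _ := h2
  · push_neg at htT
    have h1 : ‖(t:ℂ)‖ - ‖κ‖ ≤ ‖κ - (t:ℂ)‖ := by
      rw [norm_sub_rev]; exact norm_sub_norm_le _ _
    have h2 : ‖(t:ℂ)‖ = t := by rw [Complex.norm_real, Real.norm_eq_abs, abs_of_nonneg ht]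
    calc min (f t₀) 2⁻¹ * (1 + t) ≤ 2⁻¹ * (1 + t) := by
          apply mul_le_mul_of_nonneg_right (min_le_right _ _); linarith
      _ ≤ t - ‖κ‖ := by rw [hT] at htT; linarith
      _ ≤ ‖κ - (t:ℂ)‖ := by linarith [h1, h2.ge, h2.le]

lemma aux_B_int (a M : ℝ) (ha : a ∈ Set.Ioo (0:ℝ) 1) (hM : 2 ≤ M) :
    IntegrableOn (fun x : ℝ => (1+x) ^ (-a-1) * min 1 ((1+x)/M)) (Set.Ioi 0) ∧
    ∫ x in Set.Ioi (0:ℝ), (1+x) ^ (-a-1) * min 1 ((1+x)/M) ≤ (1/(1-a) + 2/a) * M ^ (-a) := by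
  obtain ⟨ha0, ha1⟩ := ha
  have hM0 : (0:ℝ) < M := by linarith
  have hr1 : (0:ℝ) < M - 1 := by linarith
  set f : ℝ → ℝ := fun x => (1+x) ^ (-a-1) * min 1 ((1+x)/M) with hfdef
  have hminc : Continuous fun x : ℝ => min 1 ((1+x)/M) := by
    apply continuous_const.min; fun_prop
  have hfc : ContinuousOn f (Set.Ici 0) := by
    apply ContinuousOn.mul
    · apply ContinuousOn.rpow_const (by fun_prop)
      intro x hx; left; simp only [Set.mem_Ici] at hx; intro h; linarith
    · exact hminc.continuousOn
  have hb2 : ∀ x ∈ Set.Ioi (M-1), f x ≤ x ^ (-a-1) := by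
    intro x hx
    simp only [Set.mem_Ioi] at hx
    have hx0 : 0 < x := by linarith
    have h1 : (1+x) ^ (-a-1) ≤ x ^ (-a-1) :=
      Real.rpow_le_rpow_of_nonpos hx0 (by linarith) (by linarith)
    calc f x ≤ (1+x) ^ (-a-1) * 1 := by
          apply mul_le_mul_of_nonneg_left (min_le_left _ _) (Real.rpow_nonneg (by linarith) _)
      _ = (1+x) ^ (-a-1) := mul_one _
      _ ≤ x ^ (-a-1) := h1
  have hint2 : IntegrableOn (fun x : ℝ => x ^ (-a-1)) (Set.Ioi (M-1)) :=
    integrableOn_Ioi_rpow_of_lt (by linarith) hr1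
  have hintf2 : IntegrableOn f (Set.Ioi (M-1)) := by
    apply Integrable.mono' hint2
      ((hfc.mono (fun x hx => by simp only [Set.mem_Ioi] at hx; simp only [Set.mem_Ici]; linarith)).aestronglyMeasurable measurableSet_Ioi)
    filter_upwards [ae_restrict_mem measurableSet_Ioi] with x hx
    rw [Real.norm_eq_abs, abs_of_nonneg]
    · exact hb2 x hx
    · simp only [Set.mem_Ioi] at hx
      apply mul_nonneg (Real.rpow_nonneg (by linarith) _)
        (le_min zero_le_one (div_nonneg (by linarith) hM0.le))
  have hintf1 : IntegrableOn f (Set.Ioc 0 (M-1)) := by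
    apply ((hfc.mono ?_).integrableOn_compact isCompact_Icc).mono_set Set.Ioc_subset_Icc_self
    intro x hx; exact hx.1
  have hunion : Set.Ioc (0:ℝ) (M-1) ∪ Set.Ioi (M-1) = Set.Ioi 0 :=
    Set.Ioc_union_Ioi_eq_Ioi (le_of_lt hr1)
  have hintf : IntegrableOn f (Set.Ioi 0) := by
    rw [← hunion]; exact hintf1.union hintf2
  refine ⟨hintf, ?_⟩
  have hsplit : ∫ x in Set.Ioi (0:ℝ), f x
      = (∫ x in Set.Ioc 0 (M-1), f x) + ∫ x in Set.Ioi (M-1), f x := by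
    rw [← hunion]
    exact setIntegral_union (Set.Ioc_disjoint_Ioi le_rfl) measurableSet_Ioi hintf1 hintf2
  -- first piece
  have hg1c : ContinuousOn (fun x : ℝ => (1+x) ^ (-a) / M) (Set.Icc 0 (M-1)) := by
    apply ContinuousOn.div_const
    apply ContinuousOn.rpow_const (by fun_prop)
    intro x hx; left; have := hx.1; intro h; linarith
  have hg1int : IntegrableOn (fun x : ℝ => (1+x) ^ (-a) / M) (Set.Ioc 0 (M-1)) :=
    (hg1c.integrableOn_compact isCompact_Icc).mono_set Set.Ioc_subset_Icc_self
  have hb1 : ∀ x ∈ Set.Ioc (0:ℝ) (M-1), f x ≤ (1+x) ^ (-a) / M := by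
    intro x hx
    have hx0 : 0 < x := hx.1
    have h1x : (0:ℝ) < 1 + x := by linarith
    calc f x ≤ (1+x) ^ (-a-1) * ((1+x)/M) := by
          apply mul_le_mul_of_nonneg_left (min_le_right _ _) (Real.rpow_nonneg (by linarith) _)
      _ = (1+x) ^ (-a) / M := by
          rw [show (-a-1 : ℝ) = -a + (-1) by ring, Real.rpow_add h1x, Real.rpow_neg_one]
          field_simp
  have hI1 : (∫ x in Set.Ioc (0:ℝ) (M-1), f x) ≤ M ^ (-a) / (1-a) := by
    have step1 : (∫ x in Set.Ioc (0:ℝ) (M-1), f x)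
        ≤ ∫ x in Set.Ioc (0:ℝ) (M-1), (1+x) ^ (-a) / M :=
      setIntegral_mono_on hintf1 hg1int measurableSet_Ioc hb1
    have step2 : (∫ x in Set.Ioc (0:ℝ) (M-1), (1+x) ^ (-a) / M)
        = ((M ^ (-a+1) - 1)/(-a+1)) / M := by
      rw [← intervalIntegral.integral_of_le hr1.le]
      rw [intervalIntegral.integral_div]
      have : (∫ x in (0:ℝ)..(M-1), (1+x) ^ (-a))
          = ∫ x in ((1:ℝ)+0)..(1+(M-1)), x ^ (-a) := by
        exact intervalIntegral.integral_comp_add_left (fun x : ℝ => x ^ (-a)) 1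
      rw [this]
      norm_num
      rw [integral_rpow (Or.inl (by linarith))]
      norm_num
    have step3 : ((M ^ (-a+1) - 1)/(-a+1)) / M ≤ M ^ (-a) / (1-a) := by
      have hMa : M ^ (-a+1) = M ^ (-a) * M := by
        rw [Real.rpow_add hM0, Real.rpow_one]
      rw [hMa]
      rw [div_div]
      rw [div_le_div_iff₀ (by nlinarith) (by linarith)]
      have h1 : (0:ℝ) ≤ M ^ (-a) := Real.rpow_nonneg hM0.le _
      nlinarith
    linarith
  -- second piece
  have hI2 : (∫ x in Set.Ioi (M-1), f x) ≤ 2 * M ^ (-a) / a := by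
    have step1 : (∫ x in Set.Ioi (M-1), f x) ≤ ∫ x in Set.Ioi (M-1), x ^ (-a-1) :=
      setIntegral_mono_on hintf2 hint2 measurableSet_Ioi hb2
    have step2 : (∫ x in Set.Ioi (M-1), (fun x : ℝ => x ^ (-a-1)) x)
        = -(M-1) ^ (-a-1+1) / (-a-1+1) := integral_Ioi_rpow_of_lt (by linarith) hr1
    simp only at step2
    have h3 : (M-1) ^ (-a) ≤ 2 * M ^ (-a) := by
      have e1 : (M-1) ^ (-a) ≤ (M/2) ^ (-a) :=
        Real.rpow_le_rpow_of_nonpos (by linarith) (by linarith) (by linarith)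
      have e2 : (M/2 : ℝ) ^ (-a) = M ^ (-a) / 2 ^ (-a) := Real.div_rpow hM0.le (by norm_num : (0:ℝ) ≤ 2) (-a)
      have e3 : (2:ℝ) ^ (-a) = (2 ^ a)⁻¹ := by rw [← Real.rpow_neg (by norm_num)]
      have e4 : (1:ℝ) ≤ 2 ^ a := Real.one_le_rpow (by norm_num) ha0.le
      have e5 : (2:ℝ) ^ a ≤ 2 := by
        calc (2:ℝ) ^ a ≤ 2 ^ (1:ℝ) := Real.rpow_le_rpow_of_exponent_le (by norm_num) ha1.le
          _ = 2 := Real.rpow_one 2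
      have hMnn : (0:ℝ) ≤ M ^ (-a) := Real.rpow_nonneg hM0.le _
      rw [e2, e3] at e1
      calc (M-1) ^ (-a) ≤ M ^ (-a) / (2 ^ a)⁻¹ := e1
        _ = M ^ (-a) * 2 ^ a := by field_simp
        _ ≤ M ^ (-a) * 2 := mul_le_mul_of_nonneg_left e5 hMnn
        _ = 2 * M ^ (-a) := by ring
    have h4 : -(M-1) ^ (-a-1+1) / (-a-1+1) = (M-1) ^ (-a) / a := by
      rw [show (-a-1+1 : ℝ) = -a by ring]
      field_simp
    rw [step2, h4] at step1
    calc (∫ x in Set.Ioi (M-1), f x) ≤ (M-1) ^ (-a) / a := step1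
      _ ≤ 2 * M ^ (-a) / a := by gcongr
  calc (∫ x in Set.Ioi (0:ℝ), f x)
      = (∫ x in Set.Ioc 0 (M-1), f x) + ∫ x in Set.Ioi (M-1), f x := hsplit
    _ ≤ M ^ (-a) / (1-a) + 2 * M ^ (-a) / a := add_le_add hI1 hI2
    _ = (1/(1-a) + 2/a) * M ^ (-a) := by ring

set_option maxHeartbeats 1600000 in
theorem stmt_12 (ξ : ℝ → ℝ) (hξ : ContDiff ℝ 2 ξ) (hmono : StrictMono ξ)
    (hpos : ∀ x : ℝ, 0 < deriv ξ x)
    (c C : ℝ) (hc : 0 < c) (hC : 0 < C)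
    (hlow : ∀ x : ℝ, 1 ≤ |x| → c * |x|⁻¹ ≤ deriv ξ x)
    (hup : ∀ x : ℝ, 1 ≤ |x| → deriv ξ x ≤ C * |x|⁻¹)
    (hsecond : ∀ x : ℝ, 1 ≤ |x| → |deriv (deriv ξ) x| ≤ C * (x ^ 2)⁻¹)
    (κ : ℂ) (hκ : κ ∉ {w : ℂ | w.im = 0 ∧ 0 ≤ w.re})
    (R : ℝ → ℂ) (hR : ContDiff ℝ 1 R) (a : ℝ) (ha : a ∈ Set.Ioo (0:ℝ) 1) (CR : ℝ)
    (hR0 : ∀ x : ℝ, ‖Complex.exp (Complex.I * κ * (x : ℂ)) * R x‖ ≤ CR * (1 + |x|) ^ (-a))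
    (hR1 : ∀ x : ℝ,
      ‖Complex.exp (Complex.I * κ * (x : ℂ)) * deriv R x‖ ≤ CR * (1 + |x|) ^ (-a - 1)) :
    ∃ C' N₀ : ℝ, ∀ N : ℝ, N₀ ≤ N →
      ‖∫ x : ℝ, Complex.exp (-Complex.I * (ξ x : ℂ) * (N : ℂ) + Complex.I * κ * (x : ℂ)) * R x‖
        ≤ C' * N ^ (-a) := by
  obtain ⟨ha0, ha1⟩ := ha
  -- unpack smoothness
  rw [show (2 : WithTop ℕ∞) = 1 + 1 from by norm_num] at hξ
  obtain ⟨hdiff, -, hξ'1⟩ := contDiff_succ_iff_deriv.mp hξ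
  obtain ⟨hdiff', hcont''⟩ := contDiff_one_iff_deriv.mp hξ'1
  have hcξ' : Continuous (deriv ξ) := hdiff'.continuous
  have hRdiff : Differentiable ℝ R := hR.differentiable (by norm_num)
  have hcR : Continuous R := hRdiff.continuous
  have hcR' : Continuous (deriv R) := (contDiff_one_iff_deriv.mp hR).2
  have hCR0 : 0 ≤ CR := by
    have h := (norm_nonneg _).trans (hR0 0)
    simpa using h
  obtain ⟨c₀, hc₀, hkap⟩ := aux_kappa κ hκ
  -- compact bounds on [-1,1]
  obtain ⟨x₀, hx₀mem, hx₀min'⟩ := isCompact_Icc.exists_isMinOn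
    (⟨0, by norm_num⟩ : (Set.Icc (-1:ℝ) 1).Nonempty) hcξ'.continuousOn
  have hx₀min := isMinOn_iff.mp hx₀min'
  obtain ⟨x₁, hx₁mem, hx₁max'⟩ := isCompact_Icc.exists_isMaxOn
    (⟨0, by norm_num⟩ : (Set.Icc (-1:ℝ) 1).Nonempty) (hcont''.abs.continuousOn)
  have hx₁max := isMaxOn_iff.mp hx₁max'
  have hδ : 0 < deriv ξ x₀ := hpos x₀
  set c₁ : ℝ := min c (deriv ξ x₀) with hc₁def
  have hc₁ : 0 < c₁ := lt_min hc hδ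
  set C₂ : ℝ := 4 * max C |deriv (deriv ξ) x₁| with hC₂def
  have hC₂0 : 0 ≤ C₂ := by positivity
  have hlow' : ∀ x : ℝ, c₁ / (1 + |x|) ≤ deriv ξ x := by
    intro x
    rcases le_or_gt 1 |x| with hx | hx
    · calc c₁ / (1 + |x|) ≤ c / |x| :=
            div_le_div₀ hc.le (min_le_left _ _) (by linarith) (by linarith)
        _ = c * |x|⁻¹ := div_eq_mul_inv _ _
        _ ≤ deriv ξ x := hlow x hx
    · have hmem : x ∈ Set.Icc (-1:ℝ) 1 := abs_le.mp hx.le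
      calc c₁ / (1 + |x|) ≤ c₁ / 1 :=
            div_le_div_of_nonneg_left hc₁.le one_pos (by linarith [abs_nonneg x])
        _ = c₁ := div_one _
        _ ≤ deriv ξ x₀ := min_le_right _ _
        _ ≤ deriv ξ x := hx₀min x hmem
  have hsec' : ∀ x : ℝ, |deriv (deriv ξ) x| ≤ C₂ / (1 + |x|) ^ 2 := by
    intro x
    rcases le_or_gt 1 |x| with hx | hx
    · have h1 := hsecond x hx
      have hx2 : (0:ℝ) < x ^ 2 := by
        have : x ≠ 0 := by intro h; rw [h] at hx; simp at hx; linarith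
        positivity
      have habs : |x| ^ 2 = x ^ 2 := sq_abs x
      have h2 : C * (x ^ 2)⁻¹ ≤ C₂ / (1 + |x|) ^ 2 := by
        rw [← div_eq_mul_inv, div_le_div_iff₀ hx2 (by positivity)]
        have hCle : C ≤ max C |deriv (deriv ξ) x₁| := le_max_left _ _
        nlinarith [abs_nonneg x, sq_nonneg (1 - |x|)]
      linarith
    · have hmem : x ∈ Set.Icc (-1:ℝ) 1 := abs_le.mp hx.le
      have h1 : |deriv (deriv ξ) x| ≤ |deriv (deriv ξ) x₁| := hx₁max x hmem
      have h2 : |deriv (deriv ξ) x₁| ≤ C₂ / 4 := by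
        rw [hC₂def]
        have := le_max_right C |deriv (deriv ξ) x₁|
        linarith
      have h3 : C₂ / 4 ≤ C₂ / (1 + |x|) ^ 2 := by
        apply div_le_div_of_nonneg_left hC₂0 (by positivity)
        nlinarith [abs_nonneg x]
      linarith
  set K : ℝ := CR / c₀ + CR * C₂ / (c₀ ^ 2 * c₁) with hKdef
  have hK0 : 0 ≤ K := by positivity
  have hfac : (0:ℝ) ≤ 2 * (1/(1-a) + 2/a) := by
    have : (0:ℝ) < 1 - a := by linarith
    positivity
  refine ⟨K * (2 * (1/(1-a) + 2/a)) * c₁ ^ (-a), max 1 (2 / c₁), ?_⟩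
  have hC'0 : 0 ≤ K * (2 * (1/(1-a) + 2/a)) * c₁ ^ (-a) :=
    mul_nonneg (mul_nonneg hK0 hfac) (Real.rpow_nonneg hc₁.le _)
  intro N hN
  have hN1 : 1 ≤ N := le_trans (le_max_left _ _) hN
  have hN0 : 0 < N := by linarith
  have hM2 : 2 ≤ c₁ * N := by
    have h := le_trans (le_max_right 1 (2 / c₁)) hN
    rw [div_le_iff₀ hc₁] at h
    linarith
  set M : ℝ := c₁ * N with hMdef
  have hM0 : 0 < M := by linarith
  -- main objects
  set F : ℝ → ℂ := fun x => Complex.exp (-Complex.I * (ξ x : ℂ) * (N : ℂ) + Complex.I * κ * (x : ℂ)) with hFdef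
  set D : ℝ → ℂ := fun x => κ - ((deriv ξ x * N : ℝ) : ℂ) with hDdef
  have hDnorm : ∀ x, c₀ * (1 + deriv ξ x * N) ≤ ‖D x‖ := fun x =>
    hkap _ (mul_nonneg (hpos x).le hN0.le)
  have hd1 : ∀ x, c₀ ≤ ‖D x‖ := by
    intro x
    refine le_trans ?_ (hDnorm x)
    nlinarith [mul_nonneg (hpos x).le hN0.le]
  have hD0 : ∀ x, D x ≠ 0 := by
    intro x h
    have h1 := hd1 x
    rw [h, norm_zero] at h1
    linarith
  have hID0 : ∀ x, Complex.I * D x ≠ 0 := fun x => mul_ne_zero Complex.I_ne_zero (hD0 x)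
  have hcD : Continuous D := by
    rw [hDdef]; fun_prop
  have hcF : Continuous F := by
    rw [hFdef]
    apply Continuous.cexp
    have := hdiff.continuous
    fun_prop
  -- derivative of F
  have hFd : ∀ x, HasDerivAt F (Complex.I * D x * F x) x := by
    intro x
    have h1 : HasDerivAt (fun y : ℝ => ((ξ y : ℝ) : ℂ)) (((deriv ξ x : ℝ)) : ℂ) x :=
      ((hdiff x).hasDerivAt).ofReal_comp
    have h2 : HasDerivAt (fun y : ℝ => -Complex.I * (ξ y : ℂ) * (N : ℂ) + Complex.I * κ * (y : ℂ))
        (-Complex.I * ((deriv ξ x : ℝ) : ℂ) * (N : ℂ) + Complex.I * κ) x := by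
      apply HasDerivAt.add
      · exact (h1.const_mul (-Complex.I)).mul_const (N : ℂ)
      · have h3 : HasDerivAt (fun y : ℝ => ((y : ℝ) : ℂ)) 1 x := (hasDerivAt_id x).ofReal_comp
        simpa using h3.const_mul (Complex.I * κ)
    have h3 := h2.cexp
    convert h3 using 1
    simp only [hDdef, hFdef]
    push_cast
    ring
  -- derivative of I * D
  have hIDd : ∀ x, HasDerivAt (fun y => Complex.I * D y)
      (Complex.I * (-((deriv (deriv ξ) x * N : ℝ) : ℂ))) x := by
    intro x
    have h1 : HasDerivAt (fun y : ℝ => ((deriv ξ y * N : ℝ) : ℂ)) ((deriv (deriv ξ) x * N : ℝ) : ℂ) x := by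
      exact_mod_cast (((hdiff' x).hasDerivAt).mul_const N).ofReal_comp
    exact (h1.const_sub κ).const_mul Complex.I
  set G : ℝ → ℂ := fun x => F x * ((deriv R x * (Complex.I * D x)
      - R x * (Complex.I * (-((deriv (deriv ξ) x * N : ℝ) : ℂ)))) / (Complex.I * D x) ^ 2) with hGdef
  have hPd : ∀ x, HasDerivAt (fun y => F y * (R y / (Complex.I * D y))) (F x * R x + G x) x := by
    intro x
    have hq : HasDerivAt (fun y => R y / (Complex.I * D y))
        ((deriv R x * (Complex.I * D x) - R x * (Complex.I * (-((deriv (deriv ξ) x * N : ℝ) : ℂ))))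
          / (Complex.I * D x) ^ 2) x :=
      ((hRdiff x).hasDerivAt).div (hIDd x) (hID0 x)
    have h := (hFd x).mul hq
    have e : Complex.I * D x * F x * (R x / (Complex.I * D x)) = F x * R x := by
      calc Complex.I * D x * F x * (R x / (Complex.I * D x))
          = F x * R x * ((Complex.I * D x) / (Complex.I * D x)) := by ring
        _ = F x * R x := by rw [div_self (hID0 x), mul_one]
    simp only [hGdef]
    rw [← e]
    exact h
  -- norm identities
  have hFz : ∀ (x : ℝ) (z : ℂ), ‖F x * z‖ = ‖Complex.exp (Complex.I * κ * (x : ℂ)) * z‖ := by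
    intro x z
    have h1 : F x * z = Complex.exp (-Complex.I * (ξ x : ℂ) * (N : ℂ))
        * (Complex.exp (Complex.I * κ * (x : ℂ)) * z) := by
      rw [hFdef]
      simp only
      rw [Complex.exp_add]
      ring
    rw [h1, norm_mul]
    have h2 : ‖Complex.exp (-Complex.I * (ξ x : ℂ) * (N : ℂ))‖ = 1 := by
      rw [Complex.norm_exp]
      have : (-Complex.I * (ξ x : ℂ) * (N : ℂ)).re = 0 := by
        simp [Complex.mul_re, Complex.mul_im]
      rw [this, Real.exp_zero]
    rw [h2, one_mul]
  have hFR : ∀ x, ‖F x * R x‖ ≤ CR * (1 + |x|) ^ (-a) := fun x => by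
    rw [hFz]; exact hR0 x
  have hFR' : ∀ x, ‖F x * deriv R x‖ ≤ CR * (1 + |x|) ^ (-a - 1) := fun x => by
    rw [hFz]; exact hR1 x
  -- pointwise bound on G
  have hGbound : ∀ x, ‖G x‖ ≤ K * ((1 + |x|) ^ (-a - 1) * min 1 ((1 + |x|) / M)) := by
    intro x
    have hu1 : 1 ≤ 1 + |x| := by linarith [abs_nonneg x]
    have hu0 : (0:ℝ) < 1 + |x| := by linarith
    set u : ℝ := 1 + |x| with hu
    set m : ℝ := min 1 (u / M) with hm
    have hm0 : 0 < m := lt_min one_pos (by positivity)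
    set d : ℝ := ‖D x‖ with hd
    have hdc : c₀ ≤ d := hd1 x
    have hd0 : 0 < d := lt_of_lt_of_le hc₀ hdc
    have hd2 : c₀ * (M / u) ≤ d := by
      have h1 : c₁ / u ≤ deriv ξ x := hlow' x
      have h2 : M / u ≤ deriv ξ x * N := by
        have : M / u = (c₁ / u) * N := by rw [hMdef]; ring
        rw [this]
        exact mul_le_mul_of_nonneg_right h1 hN0.le
      calc c₀ * (M / u) ≤ c₀ * (1 + deriv ξ x * N) :=
            mul_le_mul_of_nonneg_left (by linarith) hc₀.le
        _ ≤ d := hDnorm x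
    have hinv1 : 1 / d ≤ m / c₀ := by
      rcases min_cases 1 (u / M) with ⟨hmeq, hle⟩ | ⟨hmeq, hle⟩
      · rw [hm, hmeq]
        exact one_div_le_one_div_of_le hc₀ hdc
      · rw [hm, hmeq]
        rw [div_le_div_iff₀ hd0 hc₀, one_mul]
        have h := mul_le_mul_of_nonneg_left hd2 (div_nonneg hu0.le hM0.le)
        have hu' : u ≠ 0 := ne_of_gt hu0
        have hM' : M ≠ 0 := ne_of_gt hM0
        have heq : u / M * (c₀ * (M / u)) = c₀ := by field_simp
        linarith
    have hinv2 : N / (u ^ 2 * d ^ 2) ≤ m / (c₀ ^ 2 * c₁ * u) := by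
      rcases min_cases 1 (u / M) with ⟨hmeq, hle⟩ | ⟨hmeq, hle⟩
      · have hMu : M ≤ u := by rw [le_div_iff₀ hM0, one_mul] at hle; exact hle
        rw [hm, hmeq]
        rw [div_le_div_iff₀ (by positivity) (by positivity), one_mul]
        have hsq : c₀ ^ 2 ≤ d ^ 2 := pow_le_pow_left₀ hc₀.le hdc 2
        have hMN : c₁ * N ≤ u := by rw [← hMdef]; exact hMu
        have hlast : u ^ 2 * c₀ ^ 2 ≤ u ^ 2 * d ^ 2 :=
          mul_le_mul_of_nonneg_left hsq (sq_nonneg u)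
        calc N * (c₀ ^ 2 * c₁ * u) = (c₁ * N) * u * c₀ ^ 2 := by ring
          _ ≤ u * u * c₀ ^ 2 := by
              apply mul_le_mul_of_nonneg_right
                (mul_le_mul_of_nonneg_right hMN hu0.le) (sq_nonneg c₀)
          _ = u ^ 2 * c₀ ^ 2 := by ring
          _ ≤ u ^ 2 * d ^ 2 := hlast
      · have hMu : u ≤ M := by
          have := hle.le
          rw [div_le_one hM0] at this
          exact this
        rw [hm, hmeq]
        rw [div_le_div_iff₀ (by positivity) (by positivity)]
        have hd2sq : (c₀ * (M / u)) ^ 2 ≤ d ^ 2 := by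
          apply pow_le_pow_left₀ (by positivity) hd2
        have hu' : u ≠ 0 := ne_of_gt hu0
        have hM' : M ≠ 0 := ne_of_gt hM0
        have key : u / M * (u ^ 2 * (c₀ * (M / u)) ^ 2) = c₀ ^ 2 * M * u := by
          field_simp
        calc N * (c₀ ^ 2 * c₁ * u) = c₀ ^ 2 * (c₁ * N) * u := by ring
          _ = u / M * (u ^ 2 * (c₀ * (M / u)) ^ 2) := by rw [← hMdef]; linarith [key]
          _ ≤ u / M * (u ^ 2 * d ^ 2) := by
              apply mul_le_mul_of_nonneg_left
                (mul_le_mul_of_nonneg_left hd2sq (sq_nonneg u)) (div_nonneg hu0.le hM0.le)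
    -- split G
    have hGsplit : G x = (F x * deriv R x) / (Complex.I * D x)
        + (F x * R x) * (((deriv (deriv ξ) x * N : ℝ) : ℂ) * Complex.I) / (Complex.I * D x) ^ 2 := by
      have h1 : (F x * (deriv R x * (Complex.I * D x))) / (Complex.I * D x) ^ 2
          = F x * deriv R x / (Complex.I * D x) := by
        rw [← mul_assoc, sq, mul_div_mul_right _ _ (hID0 x)]
      simp only [hGdef]
      rw [mul_div_assoc', mul_sub, sub_div, h1]
      ring
    have hnormID : ‖Complex.I * D x‖ = d := by rw [norm_mul, Complex.norm_I, one_mul]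
    have t1 : ‖(F x * deriv R x) / (Complex.I * D x)‖ ≤ (CR * u ^ (-a - 1)) * (1 / d) := by
      rw [norm_div, hnormID, div_eq_mul_one_div]
      apply mul_le_mul_of_nonneg_right (hFR' x) (by positivity)
    have hra0 : (0:ℝ) ≤ u ^ (-a) := Real.rpow_nonneg hu0.le _
    have hra1 : (0:ℝ) ≤ u ^ (-a - 1) := Real.rpow_nonneg hu0.le _
    have t2 : ‖(F x * R x) * (((deriv (deriv ξ) x * N : ℝ) : ℂ) * Complex.I) / (Complex.I * D x) ^ 2‖
        ≤ (CR * u ^ (-a)) * (C₂ / u ^ 2 * N) * (1 / d ^ 2) := by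
      have hw : ‖(((deriv (deriv ξ) x * N : ℝ) : ℂ) * Complex.I)‖ = |deriv (deriv ξ) x| * N := by
        rw [norm_mul, Complex.norm_I, mul_one, Complex.norm_real, Real.norm_eq_abs, abs_mul,
          abs_of_nonneg hN0.le]
      rw [norm_div, norm_pow, hnormID, norm_mul, hw, div_eq_mul_one_div]
      apply mul_le_mul_of_nonneg_right ?_ (by positivity)
      have h2 : |deriv (deriv ξ) x| * N ≤ C₂ / u ^ 2 * N :=
        mul_le_mul_of_nonneg_right (hsec' x) hN0.le
      exact mul_le_mul (hFR x) h2 (mul_nonneg (abs_nonneg _) hN0.le)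
        (mul_nonneg hCR0 hra0)
    have hupow : u ^ (-a - 1) = u ^ (-a) * u⁻¹ := by
      rw [show (-a - 1 : ℝ) = -a + (-1) by ring, Real.rpow_add hu0, Real.rpow_neg_one]
    calc ‖G x‖ ≤ ‖(F x * deriv R x) / (Complex.I * D x)‖
          + ‖(F x * R x) * (((deriv (deriv ξ) x * N : ℝ) : ℂ) * Complex.I) / (Complex.I * D x) ^ 2‖ := by
          rw [hGsplit]; exact norm_add_le _ _
      _ ≤ (CR * u ^ (-a - 1)) * (1 / d) + (CR * u ^ (-a)) * (C₂ / u ^ 2 * N) * (1 / d ^ 2) :=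
          add_le_add t1 t2
      _ ≤ (CR * u ^ (-a - 1)) * (m / c₀) + (CR * u ^ (-a) * C₂) * (m / (c₀ ^ 2 * c₁ * u)) := by
          apply add_le_add
          · exact mul_le_mul_of_nonneg_left hinv1 (mul_nonneg hCR0 hra1)
          · have hu' : u ≠ 0 := ne_of_gt hu0
            have hd' : d ≠ 0 := ne_of_gt hd0
            have e : (CR * u ^ (-a)) * (C₂ / u ^ 2 * N) * (1 / d ^ 2)
                = (CR * u ^ (-a) * C₂) * (N / (u ^ 2 * d ^ 2)) := by
              field_simp
            rw [e]
            exact mul_le_mul_of_nonneg_left hinv2 (mul_nonneg (mul_nonneg hCR0 hra0) hC₂0)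
      _ = K * (u ^ (-a - 1) * m) := by
          rw [hupow, hKdef]
          have hu' : u ≠ 0 := ne_of_gt hu0
          have hc₀' : c₀ ≠ 0 := ne_of_gt hc₀
          have hc₁' : c₁ ≠ 0 := ne_of_gt hc₁
          field_simp
  -- integrable comparison function
  set Bf : ℝ → ℝ := fun t => (1 + t) ^ (-a - 1) * min 1 ((1 + t) / M) with hBfdef
  have hGB : ∀ x, ‖G x‖ ≤ K * Bf |x| := hGbound
  have hcBfabs : Continuous fun x : ℝ => Bf |x| := by
    rw [hBfdef]
    apply Continuous.mul
    · apply Continuous.rpow_const (by fun_prop)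
      intro x
      left
      have := abs_nonneg x
      intro h; linarith [h]
    · exact continuous_const.min (by fun_prop)
  have hBint : Integrable (fun x : ℝ => K * Bf |x|) := by
    have h1 : Integrable (fun x : ℝ => (1 + ‖x‖) ^ (-(a + 1))) := by
      apply integrable_one_add_norm
      rw [Module.finrank_self]
      push_cast
      linarith
    apply Integrable.mono' (h1.const_mul K) ((continuous_const.mul hcBfabs).aestronglyMeasurable)
    apply ae_of_all
    intro x
    have hu0 : (0:ℝ) < 1 + |x| := by linarith [abs_nonneg x]
    have hBnn : 0 ≤ Bf |x| := mul_nonneg (Real.rpow_nonneg hu0.le _)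
      (le_min zero_le_one (by positivity))
    show ‖K * Bf |x|‖ ≤ K * (1 + ‖x‖) ^ (-(a + 1))
    rw [Real.norm_eq_abs, abs_of_nonneg (mul_nonneg hK0 hBnn)]
    apply mul_le_mul_of_nonneg_left ?_ hK0
    rw [hBfdef]
    simp only
    rw [Real.norm_eq_abs, show (-(a + 1) : ℝ) = -a - 1 by ring]
    calc (1 + |x|) ^ (-a - 1) * min 1 ((1 + |x|) / M) ≤ (1 + |x|) ^ (-a - 1) * 1 :=
          mul_le_mul_of_nonneg_left (min_le_left _ _) (Real.rpow_nonneg hu0.le _)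
      _ = (1 + |x|) ^ (-a - 1) := mul_one _
  have hcG : Continuous G := by
    rw [hGdef]
    apply Continuous.mul hcF
    apply Continuous.div
    · fun_prop
    · fun_prop
    · exact fun x => pow_ne_zero 2 (hID0 x)
  show ‖∫ x : ℝ, F x * R x‖ ≤ K * (2 * (1/(1-a) + 2/a)) * c₁ ^ (-a) * N ^ (-a)
  by_cases hg : Integrable (fun x : ℝ => Complex.exp (Complex.I * κ * (x : ℂ)) * R x)
  · -- integrable case: integration by parts
    have hFRint : Integrable (fun x : ℝ => F x * R x) := by
      have heq : (fun x : ℝ => F x * R x) = fun x : ℝ =>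
          Complex.exp (-Complex.I * (ξ x : ℂ) * (N : ℂ))
            * (Complex.exp (Complex.I * κ * (x : ℂ)) * R x) := by
        funext x
        rw [hFdef]
        simp only
        rw [Complex.exp_add]
        ring
      rw [heq]
      apply hg.bdd_mul (c := 1) ((Continuous.cexp (by fun_prop)).aestronglyMeasurable)
      refine ae_of_all _ (fun x => ?_)
      rw [Complex.norm_exp]
      have : (-Complex.I * (ξ x : ℂ) * (N : ℂ)).re = 0 := by
        simp [Complex.mul_re, Complex.mul_im]
      rw [this, Real.exp_zero]
    have hGint : Integrable G := by
      apply Integrable.mono' hBint hcG.aestronglyMeasurable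
      exact ae_of_all _ hGB
    -- limits of the antiderivative at ±∞
    have hPbound : ∀ x : ℝ, ‖F x * (R x / (Complex.I * D x))‖ ≤ (CR / c₀) * (1 + |x|) ^ (-a) := by
      intro x
      have he : F x * (R x / (Complex.I * D x)) = (F x * R x) / (Complex.I * D x) := by ring
      rw [he, norm_div,
        show ‖Complex.I * D x‖ = ‖D x‖ by rw [norm_mul, Complex.norm_I, one_mul]]
      calc ‖F x * R x‖ / ‖D x‖ ≤ (CR * (1 + |x|) ^ (-a)) / c₀ :=
            div_le_div₀ (by positivity) (hFR x) hc₀ (hd1 x)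
        _ = (CR / c₀) * (1 + |x|) ^ (-a) := by ring
    have hbnd_top : Tendsto (fun x : ℝ => (CR / c₀) * (1 + |x|) ^ (-a)) atTop (nhds 0) := by
      have h1 : Tendsto (fun x : ℝ => 1 + |x|) atTop atTop :=
        tendsto_atTop_add_const_left _ 1 tendsto_abs_atTop_atTop
      have h2 := (tendsto_rpow_neg_atTop ha0).comp h1
      simpa using h2.const_mul (CR / c₀)
    have hbnd_bot : Tendsto (fun x : ℝ => (CR / c₀) * (1 + |x|) ^ (-a)) atBot (nhds 0) := by
      have h1 : Tendsto (fun x : ℝ => 1 + |x|) atBot atTop :=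
        tendsto_atTop_add_const_left _ 1 tendsto_abs_atBot_atTop
      have h2 := (tendsto_rpow_neg_atTop ha0).comp h1
      simpa using h2.const_mul (CR / c₀)
    have htop : Tendsto (fun x : ℝ => F x * (R x / (Complex.I * D x))) atTop (nhds 0) :=
      squeeze_zero_norm hPbound hbnd_top
    have hbot : Tendsto (fun x : ℝ => F x * (R x / (Complex.I * D x))) atBot (nhds 0) :=
      squeeze_zero_norm hPbound hbnd_bot
    have hsumint : Integrable (fun x : ℝ => F x * R x + G x) := hFRint.add hGint
    have hFTC : ∫ x : ℝ, (F x * R x + G x) = 0 - 0 :=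
      integral_of_hasDerivAt_of_tendsto hPd hsumint hbot htop
    have hIeq : ∫ x : ℝ, F x * R x = -∫ x : ℝ, G x := by
      have h1 : (∫ x : ℝ, F x * R x) + ∫ x : ℝ, G x = 0 := by
        rw [← integral_add hFRint hGint, hFTC]
        ring
      linear_combination h1
    rw [hIeq, norm_neg]
    calc ‖∫ x : ℝ, G x‖ ≤ ∫ x : ℝ, ‖G x‖ := norm_integral_le_integral_norm _
      _ ≤ ∫ x : ℝ, K * Bf |x| := integral_mono hGint.norm hBint hGB
      _ = K * ∫ x : ℝ, Bf |x| := integral_const_mul _ _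
      _ = K * (2 * ∫ x in Set.Ioi (0:ℝ), Bf x) := by rw [integral_comp_abs]
      _ ≤ K * (2 * ((1/(1-a) + 2/a) * M ^ (-a))) := by
          have hb := (aux_B_int a M ⟨ha0, ha1⟩ hM2).2
          have h2 : (∫ x in Set.Ioi (0:ℝ), Bf x) ≤ (1/(1-a) + 2/a) * M ^ (-a) := hb
          linarith [mul_le_mul_of_nonneg_left h2 hK0]
      _ = K * (2 * (1/(1-a) + 2/a)) * c₁ ^ (-a) * N ^ (-a) := by
          rw [hMdef, Real.mul_rpow hc₁.le hN0.le]
          ring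
  · -- non-integrable case: the Bochner integral is zero
    have hnot : ¬ Integrable (fun x : ℝ => F x * R x) := by
      intro hcon
      apply hg
      have heq : (fun x : ℝ => Complex.exp (Complex.I * κ * (x : ℂ)) * R x) = fun x : ℝ =>
          Complex.exp (Complex.I * (ξ x : ℂ) * (N : ℂ)) * (F x * R x) := by
        funext x
        rw [hFdef]
        simp only
        rw [← mul_assoc, ← Complex.exp_add]
        congr 2
        ring
      rw [heq]
      apply hcon.bdd_mul (c := 1) ((Continuous.cexp (by fun_prop)).aestronglyMeasurable)
      refine ae_of_all _ (fun x => ?_)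
      rw [Complex.norm_exp]
      have : (Complex.I * (ξ x : ℂ) * (N : ℂ)).re = 0 := by
        simp [Complex.mul_re, Complex.mul_im]
      rw [this, Real.exp_zero]
    rw [integral_undef hnot, norm_zero]
    exact mul_nonneg hC'0 (Real.rpow_nonneg hN0.le _)
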